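/- arXiv:1805.03231 — 2 statements merged into one kernel-verified Lean document; each statement's English description precedes it below -/
import Mathlib

section
/- Let A, B, X, Y be bounded operators on a complex Hilbert space H and 0 ≤ α ≤ 1. Then for every unit vector k ∈ H, |⟨(A*XB + B*YA) k, k⟩| ≤ (1/2)·⟨(B*|X|^(2α)B + A*|X*|^(2(1-α))A + A*|Y|^(2α)A + B*|Y*|^(2(1-α))B) k, k⟩. -/
open scoped InnerProductSpace
open ContinuousLinearMap Complex

variable {H : Type*} [NormedAddCommGroup H] [InnerProductSpace ℂ H] [CompleteSpace H]

/-- `T ^ e` for a (positive) operator `T`, via the continuous functional calculus. -/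
noncomputable def opow (T : H →L[ℂ] H) (e : ℝ) : H →L[ℂ] H :=
  cfc (fun t : ℝ => t ^ e) T

/-- The absolute value `|T| = (T*T)^(1/2)` of an operator. -/
noncomputable def oabs (T : H →L[ℂ] H) : H →L[ℂ] H :=
  cfc Real.sqrt (ContinuousLinearMap.adjoint T * T)

section Aux
open Polynomial


-- polynomial intertwining
lemma poly_intertwine (x : H →L[ℂ] H) (q : ℝ[X]) :
    x * aeval (star x * x) q = aeval (x * star x) q * x := by
  induction q using Polynomial.induction_on' with
  | add p q hp hq => simp [map_add, mul_add, add_mul, hp, hq]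
  | monomial n c =>
    simp only [aeval_monomial]
    have key : ∀ n : ℕ, x * (star x * x) ^ n = (x * star x) ^ n * x := by
      intro n
      induction n with
      | zero => simp
      | succ n ih =>
        rw [pow_succ, ← mul_assoc, ih, pow_succ]
        noncomm_ring
    rw [← mul_assoc]
    have : x * algebraMap ℝ (H →L[ℂ] H) c = algebraMap ℝ (H →L[ℂ] H) c * x :=
      (Algebra.commutes' c x).symm
    rw [this, mul_assoc, key, ← mul_assoc]

lemma cfc_intertwine (x : H →L[ℂ] H) {f : ℝ → ℝ} (hf : Continuous f) :
    x * cfc f (star x * x) = cfc f (x * star x) * x := by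
  set a := star x * x with ha_def
  set b := x * star x with hb_def
  have ha : IsSelfAdjoint a := IsSelfAdjoint.star_mul_self x
  have hb : IsSelfAdjoint b := IsSelfAdjoint.mul_star_self x
  set M : ℝ := (max ‖a‖ ‖b‖) * ‖(1 : H →L[ℂ] H)‖ with hM_def
  have hMa : spectrum ℝ a ⊆ Set.Icc (-M) M := by
    intro t ht
    have := spectrum.subset_closedBall_norm_mul (𝕜 := ℝ) a ht
    simp only [Metric.mem_closedBall, dist_zero_right, Real.norm_eq_abs] at this
    have h2 : ‖a‖ * ‖(1 : H →L[ℂ] H)‖ ≤ M := by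
      apply mul_le_mul_of_nonneg_right (le_max_left _ _) (norm_nonneg _)
    constructor <;> [linarith [abs_le.mp (this.trans h2) |>.1]; exact (abs_le.mp (this.trans h2)).2]
  have hMb : spectrum ℝ b ⊆ Set.Icc (-M) M := by
    intro t ht
    have := spectrum.subset_closedBall_norm_mul (𝕜 := ℝ) b ht
    simp only [Metric.mem_closedBall, dist_zero_right, Real.norm_eq_abs] at this
    have h2 : ‖b‖ * ‖(1 : H →L[ℂ] H)‖ ≤ M := by
      apply mul_le_mul_of_nonneg_right (le_max_right _ _) (norm_nonneg _)
    constructor <;> [linarith [abs_le.mp (this.trans h2) |>.1]; exact (abs_le.mp (this.trans h2)).2]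
  -- approximation: for every δ > 0 there is a polynomial close to f on Icc (-M) M
  have approx : ∀ δ > (0:ℝ), ∃ q : ℝ[X],
      ∀ t ∈ Set.Icc (-M) M, |f t - q.eval t| < δ := by
    intro δ hδ
    set g : C(Set.Icc (-M) M, ℝ) := ContinuousMap.restrict _ ⟨f, hf⟩ with hg
    have hmem : g ∈ (polynomialFunctions (Set.Icc (-M) M)).topologicalClosure := by
      rw [polynomialFunctions_closure_eq_top]; trivial
    have hmem' : g ∈ closure ((polynomialFunctions (Set.Icc (-M) M) : Set C(Set.Icc (-M) M, ℝ))) :=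
      hmem
    rw [Metric.mem_closure_iff] at hmem'
    obtain ⟨p, hp, hdist⟩ := hmem' δ hδ
    obtain ⟨q, -, rfl⟩ := hp
    refine ⟨q, fun t ht => ?_⟩
    have := ContinuousMap.dist_apply_le_dist (f := g)
      (g := Polynomial.toContinuousMapOnAlgHom (Set.Icc (-M) M) q) ⟨t, ht⟩
    have h2 : dist (f t) (q.eval t) < δ := lt_of_le_of_lt this hdist
    rwa [Real.dist_eq] at h2
  rw [← sub_eq_zero, ← norm_le_zero_iff]
  refine le_of_forall_pos_le_add fun ε hε => ?_
  rw [zero_add]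
  have hδ : (0:ℝ) < ε / (2 * ‖x‖ + 1) := by positivity
  obtain ⟨q, hq⟩ := approx _ hδ
  set δ := ε / (2 * ‖x‖ + 1)
  have h1 : ‖cfc f a - aeval a q‖ ≤ δ := by
    rw [← cfc_polynomial q a, ← cfc_sub (hf := hf.continuousOn)
      (hg := (Polynomial.continuous q).continuousOn)]
    exact norm_cfc_le hδ.le fun t ht => by
      rw [Real.norm_eq_abs]; exact (hq t (hMa ht)).le
  have h2 : ‖aeval b q - cfc f b‖ ≤ δ := by
    rw [← cfc_polynomial q b, ← cfc_sub (hf := (Polynomial.continuous q).continuousOn)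
      (hg := hf.continuousOn)]
    refine norm_cfc_le hδ.le fun t ht => ?_
    rw [Real.norm_eq_abs, abs_sub_comm]
    exact (hq t (hMb ht)).le
  have hsplit : x * cfc f a - cfc f b * x
      = x * (cfc f a - aeval a q) + (aeval b q - cfc f b) * x := by
    rw [mul_sub, sub_mul, poly_intertwine]; abel
  calc ‖x * cfc f a - cfc f b * x‖
      ≤ ‖x * (cfc f a - aeval a q)‖ + ‖(aeval b q - cfc f b) * x‖ := by
        rw [hsplit]; exact norm_add_le _ _
    _ ≤ ‖x‖ * δ + δ * ‖x‖ := by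
        have n1 := norm_mul_le x (cfc f a - aeval a q)
        have n2 := norm_mul_le (aeval b q - cfc f b) x
        have := norm_nonneg x
        nlinarith
    _ ≤ ε := by
        have : ‖x‖ * δ + δ * ‖x‖ = δ * (2 * ‖x‖) := by ring
        rw [this]
        rw [div_mul_eq_mul_div, div_le_iff₀ (by positivity)]
        nlinarith [norm_nonneg x, hε.le]

lemma inner_re_mono {S T : H →L[ℂ] H} (h : S ≤ T) (u : H) :
    (⟪S u, u⟫_ℂ).re ≤ (⟪T u, u⟫_ℂ).re := by
  have h2 := ((ContinuousLinearMap.le_def S T).mp h).inner_nonneg_left u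
  simp only [ContinuousLinearMap.sub_apply, inner_sub_left, map_sub,
    RCLike.re_to_complex] at h2
  rw [Complex.le_def] at h2
  simp only [Complex.zero_re, Complex.sub_re] at h2
  linarith [h2.1]

lemma norm_apply_sq_eq (S : H →L[ℂ] H) (hS : IsSelfAdjoint S) (w : H) :
    ‖S w‖ ^ 2 = (⟪(S * S) w, w⟫_ℂ).re := by
  have h1 : (S * S) w = S (S w) := rfl
  rw [h1, ← hS.adjoint_eq, ContinuousLinearMap.adjoint_inner_left, hS.adjoint_eq]
  have := inner_self_eq_norm_sq (𝕜 := ℂ) (S w)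
  rw [RCLike.re_to_complex] at this
  exact this.symm

lemma rpow_subadd {x y p : ℝ} (hx : 0 ≤ x) (hy : 0 ≤ y) (hp : 0 ≤ p) (hp1 : p ≤ 1) :
    (x + y) ^ p ≤ x ^ p + y ^ p := by
  have h := NNReal.rpow_add_le_add_rpow x.toNNReal y.toNNReal hp hp1
  have h2 := NNReal.coe_le_coe.2 h
  rw [← Real.toNNReal_add hx hy] at h2
  simpa [NNReal.coe_rpow, Real.coe_toNNReal, hx, hy, Real.coe_toNNReal _ (add_nonneg hx hy)]
    using h2
set_option maxHeartbeats 2000000 in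
lemma kato (X : H →L[ℂ] H) {α : ℝ} (hα0 : 0 ≤ α) (hα1 : α ≤ 1) (u v : H) :
    ‖⟪X u, v⟫_ℂ‖ ≤
      ((⟪cfc (fun t : ℝ => t ^ α) (star X * X) u, u⟫_ℂ).re
        + (⟪cfc (fun t : ℝ => t ^ (1 - α)) (X * star X) v, v⟫_ℂ).re) / 2 := by
  set a := star X * X with ha_def
  set b := X * star X with hb_def
  have ha : IsSelfAdjoint a := IsSelfAdjoint.star_mul_self X
  have hb : IsSelfAdjoint b := IsSelfAdjoint.mul_star_self X
  have spa : ∀ t ∈ spectrum ℝ a, 0 ≤ t := spectrum_star_mul_self_nonneg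
  have spb : ∀ t ∈ spectrum ℝ b, 0 ≤ t := by
    have := spectrum_star_mul_self_nonneg (b := star X)
    rwa [star_star] at this
  rcases eq_or_lt_of_le hα0 with hα0' | hα0'
  · -- α = 0
    have e1 : cfc (fun t : ℝ => t ^ α) a = 1 := by
      rw [← hα0']
      simp only [Real.rpow_zero]
      exact cfc_one ℝ a
    have e2 : cfc (fun t : ℝ => t ^ (1 - α)) b = b := by
      rw [← hα0']
      simp only [sub_zero, Real.rpow_one]
      exact cfc_id' ℝ b
    rw [e1, e2]
    have h1 : ⟪X u, v⟫_ℂ = ⟪u, adjoint X v⟫_ℂ := (adjoint_inner_right X u v).symm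
    have h2 : (⟪b v, v⟫_ℂ).re = ‖adjoint X v‖ ^ 2 := by
      have hbv : b v = X (adjoint X v) := by
        rw [hb_def, star_eq_adjoint]; rfl
      rw [hbv]
      have h3 : ⟪X (adjoint X v), v⟫_ℂ = ⟪adjoint X v, adjoint X v⟫_ℂ :=
        (adjoint_inner_right X (adjoint X v) v).symm
      rw [h3]
      have := inner_self_eq_norm_sq (𝕜 := ℂ) (adjoint X v)
      rw [RCLike.re_to_complex] at this
      exact this
    rw [h1, h2]
    have h4 : ‖⟪u, adjoint X v⟫_ℂ‖ ≤ ‖u‖ * ‖adjoint X v‖ := norm_inner_le_norm _ _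
    have h5 : (⟪(1 : H →L[ℂ] H) u, u⟫_ℂ).re = ‖u‖ ^ 2 := by
      have := inner_self_eq_norm_sq (𝕜 := ℂ) u
      rw [RCLike.re_to_complex] at this
      simpa using this
    rw [h5]
    nlinarith [norm_nonneg u, norm_nonneg (adjoint X v), sq_nonneg (‖u‖ - ‖adjoint X v‖)]
  · -- 0 < α
    refine le_of_forall_pos_le_add fun δ hδ => ?_
    set c : ℝ := 2 * δ / (‖u‖ ^ 2 + 1) with hc_def
    have hc : 0 < c := by positivity
    set ε : ℝ := c ^ α⁻¹ with hε_def
    have hε : 0 < ε := Real.rpow_pos_of_pos hc _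
    have hεα : ε ^ α = c := by
      rw [hε_def, ← Real.rpow_mul hc.le, inv_mul_cancel₀ hα0'.ne', Real.rpow_one]
    have hconta : ∀ e : ℝ, ContinuousOn (fun t : ℝ => (t + ε) ^ e) (spectrum ℝ a) := by
      intro e t ht
      have h0 := spa t ht
      have h1 : t + ε ≠ 0 := by positivity
      have h2 : ContinuousAt (fun s : ℝ => s + ε) t := by fun_prop
      exact (h2.rpow_const (Or.inl h1)).continuousWithinAt
    set P := cfc (fun t : ℝ => (t + ε) ^ (α / 2)) a with hP_def
    set Q := cfc (fun t : ℝ => (t + ε) ^ (-(α / 2))) a with hQ_def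
    have hQsa : IsSelfAdjoint Q := cfc_predicate _ a
    have hPsa : IsSelfAdjoint P := cfc_predicate _ a
    have hQP : Q * P = 1 := by
      rw [hQ_def, hP_def, ← cfc_mul _ _ a (hconta _) (hconta _)]
      have e1 : cfc (fun t : ℝ => (t + ε) ^ (-(α / 2)) * (t + ε) ^ (α / 2)) a
          = cfc (fun _ : ℝ => (1 : ℝ)) a :=
        cfc_congr fun t ht => by
          have h1 : (0:ℝ) < t + ε := by have := spa t ht; linarith
          rw [← Real.rpow_add h1, neg_add_cancel, Real.rpow_zero]
      rw [e1, ← cfc_one (R := ℝ) (a := a)]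
      rfl
    have hadj : adjoint (X * Q) = Q * star X := by
      rw [← star_eq_adjoint, star_mul, hQsa.star_eq]
    set w := (Q * star X) v with hw_def
    have hXuv : ⟪X u, v⟫_ℂ = ⟪P u, w⟫_ℂ := by
      have h1 : X u = (X * Q) (P u) := by
        have h2 : X * Q * P = X := by rw [mul_assoc, hQP, mul_one]
        conv_lhs => rw [← h2]
        rfl
      rw [h1, ← adjoint_inner_right (X * Q) (P u) v, hadj, hw_def]
    -- u-side bound
    have hPP : P * P = cfc (fun t : ℝ => (t + ε) ^ α) a := by
      rw [hP_def, ← cfc_mul _ _ a (hconta _) (hconta _)]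
      exact cfc_congr fun t ht => by
        have h1 : (0:ℝ) < t + ε := by have := spa t ht; linarith
        rw [← Real.rpow_add h1, add_halves]
    have hPu : ‖P u‖ ^ 2 ≤ (⟪cfc (fun t : ℝ => t ^ α) a u, u⟫_ℂ).re + ε ^ α * ‖u‖ ^ 2 := by
      rw [norm_apply_sq_eq P hPsa u, hPP]
      have hmono1 : cfc (fun t : ℝ => (t + ε) ^ α) a ≤ cfc (fun t : ℝ => t ^ α + ε ^ α) a := by
        refine cfc_mono (fun t ht => ?_) (hconta α)
          (((Real.continuous_rpow_const hα0).add continuous_const).continuousOn)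
        exact rpow_subadd (spa t ht) hε.le hα0 hα1
      have hsplit1 : cfc (fun t : ℝ => t ^ α + ε ^ α) a
          = cfc (fun t : ℝ => t ^ α) a + algebraMap ℝ (H →L[ℂ] H) (ε ^ α) := by
        rw [cfc_add a _ _ (Real.continuous_rpow_const hα0).continuousOn continuousOn_const,
          cfc_const _ a]
      have h3 := inner_re_mono hmono1 u
      rw [hsplit1] at h3
      have halg : ((⟪(cfc (fun t : ℝ => t ^ α) a + algebraMap ℝ (H →L[ℂ] H) (ε ^ α)) u, u⟫_ℂ)).re
          = (⟪cfc (fun t : ℝ => t ^ α) a u, u⟫_ℂ).re + ε ^ α * ‖u‖ ^ 2 := by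
        rw [ContinuousLinearMap.add_apply, inner_add_left, Complex.add_re]
        congr 1
        rw [Algebra.algebraMap_eq_smul_one]
        have h4 : ((ε ^ α) • (1 : H →L[ℂ] H)) u = (ε ^ α : ℝ) • u := by
          simp [ContinuousLinearMap.smul_apply]
        have h6 : ⟪((ε ^ α : ℝ)) • u, u⟫_ℂ = ((ε ^ α : ℝ) : ℂ) * ⟪u, u⟫_ℂ := by
          rw [RCLike.real_smul_eq_coe_smul (K := ℂ), inner_smul_left]
          simp
        rw [h4, h6]
        have h5 := inner_self_eq_norm_sq (𝕜 := ℂ) u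
        rw [RCLike.re_to_complex] at h5
        rw [Complex.mul_re]
        simp [h5]
        left; rw [← Complex.ofReal_pow, Complex.ofReal_re]
      rw [halg] at h3
      exact h3
    -- v-side bound
    set g : ℝ → ℝ := fun t => (max t 0 + ε) ^ (-α) with hg_def
    have hgc : Continuous g := by
      refine continuous_iff_continuousAt.mpr fun t => ?_
      have h1 : max t 0 + ε ≠ 0 := by positivity
      have h2 : ContinuousAt (fun s : ℝ => max s 0 + ε) t := by fun_prop
      exact h2.rpow_const (Or.inl h1)
    have hQQ : Q * Q = cfc g a := by
      rw [hQ_def, ← cfc_mul _ _ a (hconta _) (hconta _)]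
      exact cfc_congr fun t ht => by
        have h0 := spa t ht
        have h1 : (0:ℝ) < t + ε := by linarith
        rw [hg_def]
        simp only [max_eq_left h0]
        rw [← Real.rpow_add h1, show -(α / 2) + -(α / 2) = -α by ring]
    have hw : ‖w‖ ^ 2 ≤ (⟪cfc (fun t : ℝ => t ^ (1 - α)) b v, v⟫_ℂ).re := by
      have h2 : w = Q ((star X) v) := rfl
      have h1 : ‖w‖ ^ 2 = (⟪(X * cfc g a * star X) v, v⟫_ℂ).re := by
        rw [h2, norm_apply_sq_eq Q hQsa ((star X) v), hQQ]
        congr 1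
        have h3 : ⟪cfc g a ((star X) v), (star X) v⟫_ℂ
            = ⟪X (cfc g a ((star X) v)), v⟫_ℂ := by
          conv_lhs => rw [star_eq_adjoint]
          exact adjoint_inner_right X _ v
        rw [h3]
        rfl
      have h4 : X * cfc g a * star X = cfc (fun t : ℝ => g t * t) b := by
        have h4a : X * cfc g a = cfc g b * X := cfc_intertwine X hgc
        have hid : b = cfc (fun t : ℝ => t) b := (cfc_id' ℝ b hb).symm
        have h5 : cfc g b * b = cfc (fun t : ℝ => g t * t) b := by
          nth_rewrite 2 [hid]
          exact (cfc_mul g _ b hgc.continuousOn continuousOn_id).symm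
        rw [h4a, mul_assoc, ← hb_def, h5]
      have hmono2 : cfc (fun t : ℝ => g t * t) b ≤ cfc (fun t : ℝ => t ^ (1 - α)) b := by
        refine cfc_mono (fun t ht => ?_) ((hgc.mul continuous_id).continuousOn)
          ((Real.continuous_rpow_const (by linarith : (0:ℝ) ≤ 1 - α)).continuousOn)
        have h0 := spb t ht
        rw [hg_def]
        simp only [max_eq_left h0]
        rcases h0.eq_or_lt with h0' | h0'
        · rw [← h0']
          simpa using Real.rpow_nonneg le_rfl _
        · have e1 : (t + ε) ^ (-α) ≤ t ^ (-α) :=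
            Real.rpow_le_rpow_of_nonpos h0' (by linarith) (by linarith)
          calc (t + ε) ^ (-α) * t ≤ t ^ (-α) * t :=
                mul_le_mul_of_nonneg_right e1 h0'.le
            _ = t ^ (1 - α) := by
                rw [show (1 - α) = -α + 1 by ring, Real.rpow_add h0', Real.rpow_one]
      rw [h1, h4]
      exact inner_re_mono hmono2 v
    have hCS : ‖⟪P u, w⟫_ℂ‖ ≤ (‖P u‖ ^ 2 + ‖w‖ ^ 2) / 2 := by
      have h6 := norm_inner_le_norm (𝕜 := ℂ) (P u) w
      nlinarith [norm_nonneg (P u), norm_nonneg w, sq_nonneg (‖P u‖ - ‖w‖)]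
    have hfin : c * ‖u‖ ^ 2 / 2 ≤ δ := by
      have h7 : c * (‖u‖ ^ 2 + 1) = 2 * δ := by
        rw [hc_def, div_mul_cancel₀ _ (by positivity : (‖u‖ ^ 2 + 1) ≠ 0)]
      nlinarith [hc.le]
    rw [hXuv]
    calc ‖⟪P u, w⟫_ℂ‖ ≤ (‖P u‖ ^ 2 + ‖w‖ ^ 2) / 2 := hCS
      _ ≤ (((⟪cfc (fun t : ℝ => t ^ α) a u, u⟫_ℂ).re + ε ^ α * ‖u‖ ^ 2)
            + (⟪cfc (fun t : ℝ => t ^ (1 - α)) b v, v⟫_ℂ).re) / 2 := by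
          have := hPu; have := hw; linarith
      _ = ((⟪cfc (fun t : ℝ => t ^ α) a u, u⟫_ℂ).re
            + (⟪cfc (fun t : ℝ => t ^ (1 - α)) b v, v⟫_ℂ).re) / 2 + ε ^ α * ‖u‖ ^ 2 / 2 := by
          ring
      _ ≤ ((⟪cfc (fun t : ℝ => t ^ α) a u, u⟫_ℂ).re
            + (⟪cfc (fun t : ℝ => t ^ (1 - α)) b v, v⟫_ℂ).re) / 2 + δ := by
          rw [hεα]
          linarith [hfin]

lemma opow_oabs_eq (X : H →L[ℂ] H) {β : ℝ} (hβ : 0 ≤ β) :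
    opow (oabs X) (2 * β) = cfc (fun t : ℝ => t ^ β) (star X * X) := by
  rw [opow, oabs, ← star_eq_adjoint]
  have ha : IsSelfAdjoint (star X * X) := IsSelfAdjoint.star_mul_self X
  have spa : ∀ t ∈ spectrum ℝ (star X * X), 0 ≤ t := spectrum_star_mul_self_nonneg
  rw [← cfc_comp (fun t : ℝ => t ^ (2 * β)) Real.sqrt (star X * X) ha
    ((Real.continuous_rpow_const (by positivity)).continuousOn)
    Real.continuous_sqrt.continuousOn]
  refine cfc_congr fun t ht => ?_
  have h0 := spa t ht
  show Real.sqrt t ^ (2 * β) = t ^ β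
  rw [Real.sqrt_eq_rpow, ← Real.rpow_mul h0]
  congr 1
  ring

end Aux

theorem berezin_pointwise_sum (A B X Y : H →L[ℂ] H) (α : ℝ)
    (hα0 : 0 ≤ α) (hα1 : α ≤ 1) (k : H) (hk : ‖k‖ = 1) :
    ‖⟪(ContinuousLinearMap.adjoint A * X * B + ContinuousLinearMap.adjoint B * Y * A) k, k⟫_ℂ‖ ≤
      (1 / 2) *
        (⟪(ContinuousLinearMap.adjoint B * opow (oabs X) (2 * α) * B +
            ContinuousLinearMap.adjoint A *
              opow (oabs (ContinuousLinearMap.adjoint X)) (2 * (1 - α)) * A +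
            ContinuousLinearMap.adjoint A * opow (oabs Y) (2 * α) * A +
            ContinuousLinearMap.adjoint B *
              opow (oabs (ContinuousLinearMap.adjoint Y)) (2 * (1 - α)) * B) k, k⟫_ℂ).re := by
  have h1a : (0:ℝ) ≤ 1 - α := by linarith
  have eX : opow (oabs X) (2 * α) = cfc (fun t : ℝ => t ^ α) (star X * X) := opow_oabs_eq X hα0
  have eY : opow (oabs Y) (2 * α) = cfc (fun t : ℝ => t ^ α) (star Y * Y) := opow_oabs_eq Y hα0
  have eX' : opow (oabs (ContinuousLinearMap.adjoint X)) (2 * (1 - α))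
      = cfc (fun t : ℝ => t ^ (1 - α)) (X * star X) := by
    rw [opow_oabs_eq (ContinuousLinearMap.adjoint X) h1a, ← star_eq_adjoint, star_star]
  have eY' : opow (oabs (ContinuousLinearMap.adjoint Y)) (2 * (1 - α))
      = cfc (fun t : ℝ => t ^ (1 - α)) (Y * star Y) := by
    rw [opow_oabs_eq (ContinuousLinearMap.adjoint Y) h1a, ← star_eq_adjoint, star_star]
  rw [eX, eY, eX', eY']
  -- expand LHS
  have hL : ⟪(ContinuousLinearMap.adjoint A * X * B + ContinuousLinearMap.adjoint B * Y * A) k,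
      k⟫_ℂ = ⟪X (B k), A k⟫_ℂ + ⟪Y (A k), B k⟫_ℂ := by
    rw [ContinuousLinearMap.add_apply, inner_add_left]
    congr 1
    · exact adjoint_inner_left A k (X (B k))
    · exact adjoint_inner_left B k (Y (A k))
  -- expand RHS
  have hR : ∀ (S : H →L[ℂ] H) (C : H →L[ℂ] H),
      ⟪(ContinuousLinearMap.adjoint C * S * C) k, k⟫_ℂ = ⟪S (C k), C k⟫_ℂ := fun S C =>
    adjoint_inner_left C k (S (C k))
  rw [hL]
  simp only [ContinuousLinearMap.add_apply, inner_add_left, hR, Complex.add_re]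
  have k1 := kato X hα0 hα1 (B k) (A k)
  have k2 := kato Y hα0 hα1 (A k) (B k)
  have htri := norm_add_le (⟪X (B k), A k⟫_ℂ) (⟪Y (A k), B k⟫_ℂ)
  linarith
end

section
/- Let A, B, X be bounded operators on a complex Hilbert space H with A, B positive, 0 ≤ α ≤ 1, and r ≥ 2. Then for every unit vector k ∈ H, |⟨((A^α X B^(1-α) + A^(1-α) X B^α)/2) k, k⟩|^r ≤ (‖X‖^r/2)·⟨(A^r + B^r) k, k⟩. -/
open scoped InnerProductSpace
open ContinuousLinearMap Complex

variable {H : Type*} [NormedAddCommGroup H] [InnerProductSpace ℂ H] [CompleteSpace H]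

lemma opow_isPositive (T : H →L[ℂ] H) (hT : T.IsPositive) (e : ℝ) :
    (opow T e).IsPositive := by
  rw [← ContinuousLinearMap.nonneg_iff_isPositive]
  exact cfc_nonneg fun x hx => Real.rpow_nonneg
    (spectrum_nonneg_of_nonneg ((ContinuousLinearMap.nonneg_iff_isPositive T).2 hT) hx) e

lemma opow_isSelfAdjoint (T : H →L[ℂ] H) (e : ℝ) :
    IsSelfAdjoint (opow T e) := cfc_predicate _ _

lemma inner_mono {S T : H →L[ℂ] H} (h : S ≤ T) (k : H) :
    (⟪S k, k⟫_ℂ).re ≤ (⟪T k, k⟫_ℂ).re := by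
  have h0 := (ContinuousLinearMap.le_def S T).mp h |>.inner_nonneg_left k
  rw [ContinuousLinearMap.sub_apply, inner_sub_left] at h0
  have h0' := (Complex.le_def.mp h0).1
  simp only [Complex.sub_re, Complex.zero_re] at h0'
  linarith

lemma phi_nonneg {T : H →L[ℂ] H} (hT : T.IsPositive) (k : H) : 0 ≤ (⟪T k, k⟫_ℂ).re := by
  have := hT.inner_nonneg_left k
  exact (Complex.le_def.mp this).1

lemma selfAdjoint_inner_move (T : H →L[ℂ] H) (hT : IsSelfAdjoint T) (x y : H) :
    ⟪T x, y⟫_ℂ = ⟪x, T y⟫_ℂ := by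
  conv_lhs => rw [← hT.adjoint_eq]
  exact ContinuousLinearMap.adjoint_inner_left T y x

lemma phi_affine (T : H →L[ℂ] H) (hT : T.IsPositive) (a b : ℝ) (k : H) (hk : ‖k‖ = 1) :
    (⟪(cfc (fun t : ℝ => a + b * t) T) k, k⟫_ℂ).re = a + b * (⟪T k, k⟫_ℂ).re := by
  have h1 : cfc (fun t : ℝ => a + b * t) T = a • (1 : H →L[ℂ] H) + b • T := by
    rw [cfc_add T (fun _ => a) (fun t => b * t) (by fun_prop) (by fun_prop),
      cfc_const a T hT.isSelfAdjoint, cfc_const_mul_id b T hT.isSelfAdjoint,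
      Algebra.algebraMap_eq_smul_one]
  have hkk : ⟪k, k⟫_ℂ = 1 := by
    rw [@inner_self_eq_norm_sq_to_K ℂ]; rw [hk]; norm_num
  rw [h1]
  simp only [ContinuousLinearMap.add_apply, ContinuousLinearMap.smul_apply,
    ContinuousLinearMap.one_apply, inner_add_left,
    RCLike.real_smul_eq_coe_smul (K := ℂ), inner_smul_real_left, hkk, Complex.add_re,
    Complex.real_smul, Complex.mul_re, Complex.ofReal_re, Complex.ofReal_im, Complex.one_re,
    Complex.one_im, smul_eq_mul]
  simp <;> ring

/-- tangent-line bound for `t ^ s` at `λ`. -/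
lemma rpow_le_tangent {t l s : ℝ} (ht : 0 ≤ t) (hl : 0 < l) (hs0 : 0 ≤ s) (hs1 : s ≤ 1) :
    t ^ s ≤ (1 - s) * l ^ s + s * l ^ (s - 1) * t := by
  have key := Real.geom_mean_le_arith_mean2_weighted (by linarith : (0:ℝ) ≤ 1 - s) hs0 hl.le ht
    (by ring)
  -- key : l ^ (1 - s) * t ^ s ≤ (1 - s) * l + s * t
  have hls : (0:ℝ) ≤ l ^ (s - 1) := Real.rpow_nonneg hl.le _
  have h2 := mul_le_mul_of_nonneg_left key hls
  have e1 : l ^ (s - 1) * (l ^ (1 - s) * t ^ s) = t ^ s := by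
    rw [← mul_assoc, ← Real.rpow_add hl]
    norm_num
  have e2 : l ^ (s - 1) * ((1 - s) * l + s * t) = (1 - s) * l ^ s + s * l ^ (s - 1) * t := by
    have : l ^ (s - 1) * l = l ^ s := by
      nth_rewrite 2 [← Real.rpow_one l]
      rw [← Real.rpow_add hl]; norm_num
    rw [mul_add, show l ^ (s - 1) * ((1 - s) * l) = (1 - s) * (l ^ (s - 1) * l) by ring, this]
    ring
  rw [e1, e2] at h2
  exact h2

lemma mccarthy (T : H →L[ℂ] H) (hT : T.IsPositive) {s : ℝ} (hs0 : 0 ≤ s) (hs1 : s ≤ 1)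
    (k : H) (hk : ‖k‖ = 1) :
    (⟪opow T s k, k⟫_ℂ).re ≤ ((⟪T k, k⟫_ℂ).re) ^ s := by
  rcases eq_or_lt_of_le hs0 with rfl | hs
  · have : opow T 0 = cfc (fun _ : ℝ => (1:ℝ)) T := by
      unfold opow; exact cfc_congr fun x _ => Real.rpow_zero x
    rw [this, cfc_const 1 T hT.isSelfAdjoint, Real.rpow_zero]
    have hkk : ⟪k, k⟫_ℂ = 1 := by
      rw [@inner_self_eq_norm_sq_to_K ℂ]; rw [hk]; norm_num
    simp [Algebra.algebraMap_eq_smul_one, hkk, hk]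
  set c := (⟪T k, k⟫_ℂ).re with hc
  have hc0 : 0 ≤ c := phi_nonneg hT k
  have key : ∀ l : ℝ, 0 < l →
      (⟪opow T s k, k⟫_ℂ).re ≤ (1 - s) * l ^ s + s * l ^ (s - 1) * c := by
    intro l hl
    have hmono : opow T s ≤ cfc (fun t : ℝ => (1 - s) * l ^ s + (s * l ^ (s - 1)) * t) T := by
      apply cfc_mono
      · intro x hx
        have hx0 : 0 ≤ x := spectrum_nonneg_of_nonneg
          ((ContinuousLinearMap.nonneg_iff_isPositive T).2 hT) hx
        have := rpow_le_tangent hx0 hl hs0 hs1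
        linarith [this]
      · exact (Real.continuous_rpow_const hs0).continuousOn
      · exact (continuous_const.add (continuous_const.mul continuous_id)).continuousOn
    calc (⟪opow T s k, k⟫_ℂ).re ≤ _ := inner_mono hmono k
      _ = (1 - s) * l ^ s + s * l ^ (s - 1) * c := by
          rw [phi_affine T hT _ _ k hk, ← hc]
  rcases eq_or_lt_of_le hc0 with hczero | hcpos
  · rw [← hczero, Real.zero_rpow hs.ne']
    have hub : ∀ ε : ℝ, 0 < ε → (⟪opow T s k, k⟫_ℂ).re ≤ ε := by
      intro ε hε
      rcases eq_or_lt_of_le hs1 with rfl | hs1'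
      · have h := key 1 one_pos
        simp only [Real.rpow_zero, Real.rpow_one, sub_self, zero_mul, one_mul, zero_add] at h
        rw [← hczero] at h
        linarith
      · set l := (ε / (1 - s)) ^ (1 / s) with hldef
        have h1s : 0 < 1 - s := by linarith
        have hεs : 0 < ε / (1 - s) := by positivity
        have hl : 0 < l := Real.rpow_pos_of_pos hεs _
        have := key l hl
        have hls : l ^ s = ε / (1 - s) := by
          rw [hldef, ← Real.rpow_mul hεs.le, one_div, inv_mul_cancel₀ hs.ne', Real.rpow_one]
        rw [← hczero] at this
        calc (⟪opow T s k, k⟫_ℂ).re ≤ (1 - s) * l ^ s + s * l ^ (s - 1) * 0 := this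
          _ = ε := by rw [hls]; field_simp; simp
    by_contra hcon
    push_neg at hcon
    have := hub ((⟪opow T s k, k⟫_ℂ).re / 2) (by linarith)
    linarith
  · have := key c hcpos
    have hcs : c ^ (s - 1) * c = c ^ s := by
      nth_rewrite 2 [← Real.rpow_one c]
      rw [← Real.rpow_add hcpos]; norm_num
    calc (⟪opow T s k, k⟫_ℂ).re ≤ (1 - s) * c ^ s + s * c ^ (s - 1) * c := this
      _ = c ^ s := by rw [mul_assoc, hcs]; ring

lemma spec_nonneg (T : H →L[ℂ] H) (hT : T.IsPositive) : ∀ x ∈ spectrum ℝ T, 0 ≤ x :=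
  fun _ hx => spectrum_nonneg_of_nonneg ((ContinuousLinearMap.nonneg_iff_isPositive T).2 hT) hx

lemma opow_opow (T : H →L[ℂ] H) (hT : T.IsPositive) {e f : ℝ} (he : 0 ≤ e) (hf : 0 ≤ f) :
    cfc (fun t : ℝ => t ^ f) (opow T e) = opow T (e * f) := by
  unfold opow
  rw [← cfc_comp (fun t : ℝ => t ^ f) (fun t : ℝ => t ^ e) T hT.isSelfAdjoint
    ((Real.continuous_rpow_const hf).continuousOn)
    ((Real.continuous_rpow_const he).continuousOn)]
  exact cfc_congr fun x hx => by
    simp only [Function.comp_apply]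
    rw [← Real.rpow_mul (spec_nonneg T hT x hx)]

lemma opow_mul_self (T : H →L[ℂ] H) (hT : T.IsPositive) {e : ℝ} (he : 0 ≤ e) :
    opow T e * opow T e = opow T (2 * e) := by
  unfold opow
  rw [← cfc_mul (fun t : ℝ => t ^ e) (fun t : ℝ => t ^ e) T
    ((Real.continuous_rpow_const he).continuousOn) ((Real.continuous_rpow_const he).continuousOn)]
  refine cfc_congr fun x hx => ?_
  rcases eq_or_lt_of_le he with rfl | he'
  · simp
  · rw [two_mul, Real.rpow_add' (spec_nonneg T hT x hx) (by positivity)]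

lemma norm_opow_sq (T : H →L[ℂ] H) (hT : T.IsPositive) {e : ℝ} (he : 0 ≤ e) (k : H) :
    ‖opow T e k‖ ^ 2 = (⟪opow T (2 * e) k, k⟫_ℂ).re := by
  have hsa : IsSelfAdjoint (opow T e) := cfc_predicate _ _
  have h1 : opow T (2 * e) k = opow T e (opow T e k) := by
    rw [← opow_mul_self T hT he]; rfl
  have h2 := ContinuousLinearMap.adjoint_inner_left (opow T e) k (opow T e k)
  rw [hsa.adjoint_eq] at h2
  rw [h1, h2]
  have h3 := inner_self_eq_norm_sq (𝕜 := ℂ) (opow T e k)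
  simpa using h3.symm

lemma phi_sq_rpow_le (T : H →L[ℂ] H) (hT : T.IsPositive) {r : ℝ} (hr : 2 ≤ r) (k : H)
    (hk : ‖k‖ = 1) :
    ((⟪opow T 2 k, k⟫_ℂ).re) ^ (r / 2) ≤ (⟪opow T r k, k⟫_ℂ).re := by
  have hr0 : (0:ℝ) < r := by linarith
  have hTr : (opow T r).IsPositive := opow_isPositive T hT r
  have h2r : (0:ℝ) ≤ 2 / r := by positivity
  have h2r1 : 2 / r ≤ 1 := by rw [div_le_one hr0]; linarith
  have hcomp : opow (opow T r) (2 / r) = opow T 2 := by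
    show cfc (fun t : ℝ => t ^ (2/r)) (opow T r) = opow T 2
    rw [opow_opow T hT hr0.le h2r]
    congr 1
    field_simp
  have hmc := mccarthy (opow T r) hTr h2r h2r1 k hk
  rw [hcomp] at hmc
  have hq : 0 ≤ (⟪opow T r k, k⟫_ℂ).re := phi_nonneg hTr k
  have h0 : 0 ≤ (⟪opow T 2 k, k⟫_ℂ).re := phi_nonneg (opow_isPositive T hT 2) k
  calc ((⟪opow T 2 k, k⟫_ℂ).re) ^ (r/2) ≤ ((⟪opow T r k, k⟫_ℂ).re ^ (2/r)) ^ (r/2) :=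
        Real.rpow_le_rpow h0 hmc (by positivity)
    _ = (⟪opow T r k, k⟫_ℂ).re := by
        rw [← Real.rpow_mul hq, show (2/r)*(r/2) = 1 by field_simp, Real.rpow_one]

lemma norm_le_rpow (T : H →L[ℂ] H) (hT : T.IsPositive) {s : ℝ} (hs0 : 0 ≤ s) (hs1 : s ≤ 1)
    (k : H) (hk : ‖k‖ = 1) :
    ‖opow T s k‖ ≤ ((⟪opow T 2 k, k⟫_ℂ).re ^ (1/2 : ℝ)) ^ s := by
  set x := (⟪opow T 2 k, k⟫_ℂ).re with hx
  have hT2 : (opow T 2).IsPositive := opow_isPositive T hT 2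
  have hx0 : 0 ≤ x := phi_nonneg hT2 k
  have h1 : ‖opow T s k‖ ^ 2 = (⟪opow T (2 * s) k, k⟫_ℂ).re := norm_opow_sq T hT hs0 k
  have h2 : opow (opow T 2) s = opow T (2 * s) := by
    show cfc (fun t : ℝ => t ^ s) (opow T 2) = opow T (2 * s)
    exact opow_opow T hT (by norm_num) hs0
  have h3 : (⟪opow (opow T 2) s k, k⟫_ℂ).re ≤ x ^ s := mccarthy (opow T 2) hT2 hs0 hs1 k hk
  rw [h2] at h3
  have hb0 : (0:ℝ) ≤ (x ^ (1/2 : ℝ)) ^ s := Real.rpow_nonneg (Real.rpow_nonneg hx0 _) _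
  refine le_of_pow_le_pow_left₀ two_ne_zero hb0 ?_
  calc ‖opow T s k‖ ^ 2 ≤ x ^ s := by rw [h1]; exact h3
    _ = ((x ^ (1/2 : ℝ)) ^ s) ^ 2 := by
        rw [← Real.rpow_natCast ((x ^ (1/2 : ℝ)) ^ s) 2, ← Real.rpow_mul hx0,
          ← Real.rpow_mul hx0]
        congr 1
        ring

theorem berezin_pointwise_heinz (A B X : H →L[ℂ] H)
    (hA : A.IsPositive) (hB : B.IsPositive) (α r : ℝ)
    (hα0 : 0 ≤ α) (hα1 : α ≤ 1) (hr : 2 ≤ r) (k : H) (hk : ‖k‖ = 1) :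
    ‖⟪((1 / 2 : ℝ) •
        (opow A α * X * opow B (1 - α) + opow A (1 - α) * X * opow B α)) k, k⟫_ℂ‖ ^ r ≤
      ‖X‖ ^ r / 2 * (⟪(opow A r + opow B r) k, k⟫_ℂ).re := by
  have hr0 : (0:ℝ) < r := by linarith
  have hr1 : (1:ℝ) ≤ r := by linarith
  have hα1' : (0:ℝ) ≤ 1 - α := by linarith
  set x := (⟪opow A 2 k, k⟫_ℂ).re with hxdef
  set y := (⟪opow B 2 k, k⟫_ℂ).re with hydef
  have hx0 : 0 ≤ x := phi_nonneg (opow_isPositive A hA 2) k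
  have hy0 : 0 ≤ y := phi_nonneg (opow_isPositive B hB 2) k
  set X1 := x ^ (1/2 : ℝ) with hX1def
  set Y1 := y ^ (1/2 : ℝ) with hY1def
  have hX10 : 0 ≤ X1 := Real.rpow_nonneg hx0 _
  have hY10 : 0 ≤ Y1 := Real.rpow_nonneg hy0 _
  -- norm bounds
  have hu1 : ‖opow A α k‖ ≤ X1 ^ α := norm_le_rpow A hA hα0 hα1 k hk
  have hu2 : ‖opow A (1 - α) k‖ ≤ X1 ^ (1 - α) := norm_le_rpow A hA hα1' (by linarith) k hk
  have hv1 : ‖opow B (1 - α) k‖ ≤ Y1 ^ (1 - α) := norm_le_rpow B hB hα1' (by linarith) k hk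
  have hv2 : ‖opow B α k‖ ≤ Y1 ^ α := norm_le_rpow B hB hα0 hα1 k hk
  -- inner product bound for each summand
  have hbd : ∀ (P Q : H →L[ℂ] H), IsSelfAdjoint P →
      ‖⟪(P * X * Q) k, k⟫_ℂ‖ ≤ ‖X‖ * ‖Q k‖ * ‖P k‖ := by
    intro P Q hP
    have h1 : (P * X * Q) k = P (X (Q k)) := rfl
    have h2 := ContinuousLinearMap.adjoint_inner_left P k (X (Q k))
    rw [hP.adjoint_eq] at h2
    rw [h1, h2]
    calc ‖⟪X (Q k), P k⟫_ℂ‖ ≤ ‖X (Q k)‖ * ‖P k‖ := norm_inner_le_norm _ _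
      _ ≤ ‖X‖ * ‖Q k‖ * ‖P k‖ := by
          gcongr
          exact X.le_opNorm (Q k)
  -- first bound on L
  have hgm1 : X1 ^ α * Y1 ^ (1 - α) ≤ α * X1 + (1 - α) * Y1 :=
    Real.geom_mean_le_arith_mean2_weighted hα0 hα1' hX10 hY10 (by ring)
  have hgm2 : X1 ^ (1 - α) * Y1 ^ α ≤ (1 - α) * X1 + α * Y1 :=
    Real.geom_mean_le_arith_mean2_weighted hα1' hα0 hX10 hY10 (by ring)
  have hprod1 : ‖opow B (1 - α) k‖ * ‖opow A α k‖ ≤ α * X1 + (1 - α) * Y1 := by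
    calc ‖opow B (1 - α) k‖ * ‖opow A α k‖ ≤ Y1 ^ (1 - α) * (X1 ^ α) := by
          exact mul_le_mul hv1 hu1 (norm_nonneg _) (Real.rpow_nonneg hY10 _)
      _ = X1 ^ α * Y1 ^ (1 - α) := by ring
      _ ≤ _ := hgm1
  have hprod2 : ‖opow B α k‖ * ‖opow A (1 - α) k‖ ≤ (1 - α) * X1 + α * Y1 := by
    calc ‖opow B α k‖ * ‖opow A (1 - α) k‖ ≤ Y1 ^ α * (X1 ^ (1 - α)) := by
          exact mul_le_mul hv2 hu2 (norm_nonneg _) (Real.rpow_nonneg hY10 _)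
      _ = X1 ^ (1 - α) * Y1 ^ α := by ring
      _ ≤ _ := hgm2
  set L := ‖⟪((1 / 2 : ℝ) •
    (opow A α * X * opow B (1 - α) + opow A (1 - α) * X * opow B α)) k, k⟫_ℂ‖ with hLdef
  have hL : L ≤ ‖X‖ * ((X1 + Y1) / 2) := by
    have e1 : ((1 / 2 : ℝ) •
        (opow A α * X * opow B (1 - α) + opow A (1 - α) * X * opow B α)) k
        = (1 / 2 : ℝ) • ((opow A α * X * opow B (1 - α)) k
          + (opow A (1 - α) * X * opow B α) k) := rfl
    have e2 : ⟪((1/2 : ℝ) • ((opow A α * X * opow B (1 - α)) k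
          + (opow A (1 - α) * X * opow B α) k)), k⟫_ℂ
        = (1/2 : ℝ) • (⟪(opow A α * X * opow B (1 - α)) k, k⟫_ℂ
          + ⟪(opow A (1 - α) * X * opow B α) k, k⟫_ℂ) := by
      rw [RCLike.real_smul_eq_coe_smul (K := ℂ), inner_smul_real_left, inner_add_left]
    rw [hLdef, e1, e2, norm_smul]
    have hb1 := hbd (opow A α) (opow B (1 - α)) (cfc_predicate _ _)
    have hb2 := hbd (opow A (1 - α)) (opow B α) (cfc_predicate _ _)
    have htri : ‖⟪(opow A α * X * opow B (1 - α)) k, k⟫_ℂ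
        + ⟪(opow A (1 - α) * X * opow B α) k, k⟫_ℂ‖
        ≤ ‖X‖ * (‖opow B (1-α) k‖ * ‖opow A α k‖) + ‖X‖ * (‖opow B α k‖ * ‖opow A (1-α) k‖) := by
      refine (norm_add_le _ _).trans ?_
      gcongr
      · exact le_trans hb1 (by rw [mul_assoc])
      · exact le_trans hb2 (by rw [mul_assoc])
    have hXnn : (0:ℝ) ≤ ‖X‖ := norm_nonneg X
    have : ‖X‖ * (‖opow B (1-α) k‖ * ‖opow A α k‖) + ‖X‖ * (‖opow B α k‖ * ‖opow A (1-α) k‖)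
        ≤ ‖X‖ * (X1 + Y1) := by
      have := mul_le_mul_of_nonneg_left hprod1 hXnn
      have := mul_le_mul_of_nonneg_left hprod2 hXnn
      nlinarith [mul_le_mul_of_nonneg_left hprod1 hXnn, mul_le_mul_of_nonneg_left hprod2 hXnn]
    calc ‖(1/2 : ℝ)‖ * ‖_ + _‖ ≤ (1/2 : ℝ) * (‖X‖ * (X1 + Y1)) := by
          rw [norm_div, norm_one]
          norm_num
          exact le_trans htri this
      _ = ‖X‖ * ((X1 + Y1) / 2) := by ring
  have hL0 : 0 ≤ L := norm_nonneg _
  -- raise to power r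
  have step1 : L ^ r ≤ (‖X‖ * ((X1 + Y1) / 2)) ^ r := Real.rpow_le_rpow hL0 hL hr0.le
  have hXY0 : (0:ℝ) ≤ (X1 + Y1) / 2 := by positivity
  have step2 : (‖X‖ * ((X1 + Y1) / 2)) ^ r = ‖X‖ ^ r * ((X1 + Y1) / 2) ^ r :=
    Real.mul_rpow (norm_nonneg X) hXY0
  have step3 : ((X1 + Y1) / 2) ^ r ≤ (X1 ^ r + Y1 ^ r) / 2 := by
    have hconv := (convexOn_rpow hr1).2 (Set.mem_Ici.mpr hX10) (Set.mem_Ici.mpr hY10)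
      (by norm_num : (0:ℝ) ≤ 1/2) (by norm_num : (0:ℝ) ≤ 1/2) (by norm_num)
    simp only [smul_eq_mul] at hconv
    calc ((X1 + Y1) / 2) ^ r = (1/2 * X1 + 1/2 * Y1) ^ r := by ring_nf
      _ ≤ 1/2 * X1 ^ r + 1/2 * Y1 ^ r := hconv
      _ = (X1 ^ r + Y1 ^ r) / 2 := by ring
  have hXr : X1 ^ r = x ^ (r / 2) := by
    rw [hX1def, ← Real.rpow_mul hx0]
    congr 1
    ring
  have hYr : Y1 ^ r = y ^ (r / 2) := by
    rw [hY1def, ← Real.rpow_mul hy0]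
    congr 1
    ring
  have hxp : x ^ (r / 2) ≤ (⟪opow A r k, k⟫_ℂ).re := phi_sq_rpow_le A hA hr k hk
  have hyp : y ^ (r / 2) ≤ (⟪opow B r k, k⟫_ℂ).re := phi_sq_rpow_le B hB hr k hk
  have hrhs : (⟪(opow A r + opow B r) k, k⟫_ℂ).re
      = (⟪opow A r k, k⟫_ℂ).re + (⟪opow B r k, k⟫_ℂ).re := by
    rw [ContinuousLinearMap.add_apply, inner_add_left, Complex.add_re]
  have hXrn : (0:ℝ) ≤ ‖X‖ ^ r := Real.rpow_nonneg (norm_nonneg X) r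
  calc L ^ r ≤ ‖X‖ ^ r * ((X1 + Y1) / 2) ^ r := by rw [← step2]; exact step1
    _ ≤ ‖X‖ ^ r * ((X1 ^ r + Y1 ^ r) / 2) := mul_le_mul_of_nonneg_left step3 hXrn
    _ ≤ ‖X‖ ^ r * (((⟪opow A r k, k⟫_ℂ).re + (⟪opow B r k, k⟫_ℂ).re) / 2) := by
        have : X1 ^ r + Y1 ^ r ≤ (⟪opow A r k, k⟫_ℂ).re + (⟪opow B r k, k⟫_ℂ).re := by
          rw [hXr, hYr]; exact add_le_add hxp hyp
        gcongr
    _ = ‖X‖ ^ r / 2 * (⟪(opow A r + opow B r) k, k⟫_ℂ).re := by rw [hrhs]; ring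
end
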